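/- With a single common tuning parameter λ₁ = ⋯ = λₚ = λ > 0, the objective minimized jointly over β and ω ≥ 0, namely (1/2)‖y − Xβ‖₂² + ωᵀ|β| + (γ/2)‖ω − λ𝟙‖₂², has the same infimum over (β, ω) as the MCP-penalized regression (1/2)‖y − Xβ‖₂² + Σⱼ P_{λ,γ}(βⱼ) over β. -/

import Mathlib

lemma mcp_le_aux (lam gam b w : ℝ) (hlam : 0 < lam) (hgam : 0 < gam) (hw : 0 ≤ w) :
    (if |b| < lam * gam then lam * |b| - b ^ 2 / (2 * gam) else lam ^ 2 * gam / 2)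
      ≤ w * |b| + gam / 2 * (w - lam) ^ 2 := by
  have hb : 0 ≤ |b| := abs_nonneg b
  have hb2 : b ^ 2 = |b| ^ 2 := (sq_abs b).symm
  split_ifs with h
  · rw [hb2]
    have key : w * |b| + gam / 2 * (w - lam) ^ 2 - (lam * |b| - |b| ^ 2 / (2 * gam))
        = gam / 2 * (w - lam + |b| / gam) ^ 2 := by
      field_simp; ring
    linarith [key, mul_nonneg (by positivity : (0:ℝ) ≤ gam / 2)
      (sq_nonneg (w - lam + |b| / gam))]
  · push_neg at h
    nlinarith [sq_nonneg w, mul_nonneg hw hb, mul_le_mul_of_nonneg_left h hw]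

lemma mcp_eq_aux (lam gam b : ℝ) (hlam : 0 < lam) (hgam : 0 < gam) :
    (if |b| < lam * gam then lam * |b| - b ^ 2 / (2 * gam) else lam ^ 2 * gam / 2)
      = max (lam - |b| / gam) 0 * |b|
        + gam / 2 * (max (lam - |b| / gam) 0 - lam) ^ 2 := by
  have hb2 : b ^ 2 = |b| ^ 2 := (sq_abs b).symm
  split_ifs with h
  · have h0 : 0 ≤ lam - |b| / gam := by
      rw [sub_nonneg, div_le_iff₀ hgam]; nlinarith
    rw [max_eq_left h0]
    field_simp; rw [hb2]; ring
  · push_neg at h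
    have h0 : lam - |b| / gam ≤ 0 := by
      rw [sub_nonpos, le_div_iff₀ hgam]; nlinarith
    rw [max_eq_right h0]
    ring

theorem joint_min_eq_mcp_min (n p : ℕ) (y : Fin n → ℝ) (X : Matrix (Fin n) (Fin p) ℝ)
    (lam gam : ℝ) (hlam : 0 < lam) (hgam : 0 < gam) :
    sInf {v : ℝ | ∃ β ω : Fin p → ℝ, (∀ j, 0 ≤ ω j) ∧
        v = (1 / 2) * ∑ i, (y i - ∑ j, X i j * β j) ^ 2 +
          (∑ j, ω j * |β j|) + gam / 2 * ∑ j, (ω j - lam) ^ 2} =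
      sInf {v : ℝ | ∃ β : Fin p → ℝ,
        v = (1 / 2) * ∑ i, (y i - ∑ j, X i j * β j) ^ 2 +
          ∑ j, (if |β j| < lam * gam then lam * |β j| - (β j) ^ 2 / (2 * gam)
                else lam ^ 2 * gam / 2)} := by
  set S := {v : ℝ | ∃ β ω : Fin p → ℝ, (∀ j, 0 ≤ ω j) ∧
        v = (1 / 2) * ∑ i, (y i - ∑ j, X i j * β j) ^ 2 +
          (∑ j, ω j * |β j|) + gam / 2 * ∑ j, (ω j - lam) ^ 2} with hS
  set T := {v : ℝ | ∃ β : Fin p → ℝ,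
        v = (1 / 2) * ∑ i, (y i - ∑ j, X i j * β j) ^ 2 +
          ∑ j, (if |β j| < lam * gam then lam * |β j| - (β j) ^ 2 / (2 * gam)
                else lam ^ 2 * gam / 2)} with hT
  have hTne : T.Nonempty := ⟨_, ⟨0, rfl⟩⟩
  have hSne : S.Nonempty := ⟨_, ⟨0, 0, fun j => le_refl 0, rfl⟩⟩
  have hSbdd : BddBelow S := by
    refine ⟨0, fun v hv => ?_⟩
    obtain ⟨β, ω, hω, rfl⟩ := hv
    have h1 : (0:ℝ) ≤ (1 / 2) * ∑ i, (y i - ∑ j, X i j * β j) ^ 2 := by positivity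
    have h2 : (0:ℝ) ≤ ∑ j, ω j * |β j| :=
      Finset.sum_nonneg fun j _ => mul_nonneg (hω j) (abs_nonneg _)
    have h3 : (0:ℝ) ≤ gam / 2 * ∑ j, (ω j - lam) ^ 2 := by positivity
    linarith
  have hTbdd : BddBelow T := by
    refine ⟨0, fun v hv => ?_⟩
    obtain ⟨β, rfl⟩ := hv
    have h1 : (0:ℝ) ≤ (1 / 2) * ∑ i, (y i - ∑ j, X i j * β j) ^ 2 := by positivity
    have h2 : (0:ℝ) ≤ ∑ j, (if |β j| < lam * gam then lam * |β j| - (β j) ^ 2 / (2 * gam)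
                else lam ^ 2 * gam / 2) := by
      refine Finset.sum_nonneg fun j _ => ?_
      rw [mcp_eq_aux lam gam (β j) hlam hgam]
      have := le_max_right (lam - |β j| / gam) 0
      positivity
    linarith
  apply le_antisymm
  · -- T ⊆ S
    refine csInf_le_csInf hSbdd hTne fun v hv => ?_
    obtain ⟨β, rfl⟩ := hv
    refine ⟨β, fun j => max (lam - |β j| / gam) 0, fun j => le_max_right _ _, ?_⟩
    have : ∑ j, (if |β j| < lam * gam then lam * |β j| - (β j) ^ 2 / (2 * gam)
                else lam ^ 2 * gam / 2)
        = (∑ j, max (lam - |β j| / gam) 0 * |β j|)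
          + gam / 2 * ∑ j, (max (lam - |β j| / gam) 0 - lam) ^ 2 := by
      rw [Finset.mul_sum, ← Finset.sum_add_distrib]
      exact Finset.sum_congr rfl fun j _ => mcp_eq_aux lam gam (β j) hlam hgam
    rw [this]; ring
  · refine le_csInf hSne fun v hv => ?_
    obtain ⟨β, ω, hω, rfl⟩ := hv
    have hmem : ((1 / 2) * ∑ i, (y i - ∑ j, X i j * β j) ^ 2 +
          ∑ j, (if |β j| < lam * gam then lam * |β j| - (β j) ^ 2 / (2 * gam)
                else lam ^ 2 * gam / 2)) ∈ T := ⟨β, rfl⟩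
    refine (csInf_le hTbdd hmem).trans ?_
    have : ∑ j, (if |β j| < lam * gam then lam * |β j| - (β j) ^ 2 / (2 * gam)
                else lam ^ 2 * gam / 2)
        ≤ (∑ j, ω j * |β j|) + gam / 2 * ∑ j, (ω j - lam) ^ 2 := by
      rw [Finset.mul_sum, ← Finset.sum_add_distrib]
      exact Finset.sum_le_sum fun j _ => mcp_le_aux lam gam (β j) (ω j) hlam hgam (hω j)
    linarith
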